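/- For all z in the upper half-plane ℍ, the principal logarithm satisfies log z = ∫_{-∞}^{0} (1/(t−z) − t/(t²+1)) dt. In particular the principal logarithm is a Nevanlinna–Pick function. -/

import Mathlib

open MeasureTheory Set Complex Filter Topology Real

/-- The integrand is continuous for `z` in the upper half-plane. -/
lemma nev_aux_cont (z : ℂ) (hz : 0 < z.im) :
    Continuous fun t : ℝ => (((t : ℂ) - z)⁻¹ - (t : ℂ) / ((t : ℂ) ^ 2 + 1)) := by
  have hne : ∀ t : ℝ, ((t : ℂ) - z) ≠ 0 := by
    intro t h
    have : ((t : ℂ) - z).im = 0 := by rw [h]; simp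
    simp only [Complex.sub_im, Complex.ofReal_im, zero_sub, neg_eq_zero] at this
    exact hz.ne' this
  have hden : ∀ t : ℝ, ((t : ℂ) ^ 2 + 1) ≠ 0 := by
    intro t
    have : ((t : ℂ) ^ 2 + 1) = ((t ^ 2 + 1 : ℝ) : ℂ) := by push_cast; ring
    rw [this]
    exact_mod_cast (by positivity : (t ^ 2 + 1 : ℝ) ≠ 0)
  exact ((Complex.continuous_ofReal.sub continuous_const).inv₀ hne).sub
    (Complex.continuous_ofReal.div
      ((Complex.continuous_ofReal.pow 2).add continuous_const) hden)

/-- The integrand is integrable on `Iic 0`. -/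
lemma nev_aux_int (z : ℂ) (hz : 0 < z.im) :
    IntegrableOn (fun t : ℝ => (((t : ℂ) - z)⁻¹ - (t : ℂ) / ((t : ℂ) ^ 2 + 1)))
      (Set.Iic (0 : ℝ)) := by
  set f' : ℝ → ℂ := fun t : ℝ => (((t : ℂ) - z)⁻¹ - (t : ℂ) / ((t : ℂ) ^ 2 + 1)) with hf'
  have hcont := nev_aux_cont z hz
  set T : ℝ := max 1 (2 * ‖z‖) with hT
  have hT1 : (1 : ℝ) ≤ T := le_max_left _ _
  have hT2 : 2 * ‖z‖ ≤ T := le_max_right _ _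
  have hne : ∀ t : ℝ, ((t : ℂ) - z) ≠ 0 := by
    intro t h
    have : ((t : ℂ) - z).im = 0 := by rw [h]; simp
    simp only [Complex.sub_im, Complex.ofReal_im, zero_sub, neg_eq_zero] at this
    exact hz.ne' this
  have hdenR : ∀ t : ℝ, ((t : ℂ) ^ 2 + 1) = ((t ^ 2 + 1 : ℝ) : ℂ) := by
    intro t; push_cast; ring
  have hden : ∀ t : ℝ, ((t : ℂ) ^ 2 + 1) ≠ 0 := by
    intro t
    rw [hdenR t]
    exact_mod_cast (by positivity : (t ^ 2 + 1 : ℝ) ≠ 0)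
  have h1 : IntegrableOn f' (Set.Iic (-T)) := by
    apply Integrable.mono'
      (g := fun t : ℝ => 2 * (‖z‖ + 1) * (1 + t ^ 2)⁻¹)
      ((integrable_inv_one_add_sq.const_mul _).integrableOn)
      (hcont.aestronglyMeasurable.restrict)
    rw [ae_restrict_iff' measurableSet_Iic]
    filter_upwards with t ht
    have htT : t ≤ -T := ht
    have ht1 : 1 ≤ -t := by linarith
    have habs_t : ‖(t : ℂ)‖ = |t| := by rw [Complex.norm_real, Real.norm_eq_abs]
    have ht_abs : |t| = -t := abs_of_neg (by linarith)
    -- rewrite f' t as a single fraction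
    have hfrac : ((t : ℂ) - z)⁻¹ - (t : ℂ) / ((t : ℂ) ^ 2 + 1)
        = (z * t + 1) / (((t : ℂ) - z) * ((t : ℂ) ^ 2 + 1)) := by
      field_simp [hne t, hden t]
      ring
    show ‖((t : ℂ) - z)⁻¹ - (t : ℂ) / ((t : ℂ) ^ 2 + 1)‖ ≤ _
    rw [hfrac]
    rw [norm_div, norm_mul]
    have hnum : ‖z * (t : ℂ) + 1‖ ≤ (‖z‖ + 1) * (-t) := by
      calc ‖z * (t : ℂ) + 1‖ ≤ ‖z * (t : ℂ)‖ + ‖(1 : ℂ)‖ := norm_add_le _ _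
        _ = ‖z‖ * (-t) + 1 := by
            rw [norm_mul, norm_one,
              habs_t, ht_abs]
        _ ≤ ‖z‖ * (-t) + 1 * (-t) := by nlinarith
        _ = (‖z‖ + 1) * (-t) := by ring
    have hd1 : (-t) / 2 ≤ ‖(t : ℂ) - z‖ := by
      have := norm_sub_norm_le ((t : ℂ)) z
      rw [habs_t, ht_abs] at this
      have hzabs : ‖z‖ ≤ (-t) / 2 := by
        have : 2 * ‖z‖ ≤ -t := by linarith
        linarith
      calc (-t) / 2 = (-t) - (-t) / 2 := by ring
        _ ≤ (-t) - ‖z‖ := by linarith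
        _ ≤ ‖(t : ℂ) - z‖ := this
    have hd2 : ‖((t : ℂ) ^ 2 + 1)‖ = t ^ 2 + 1 := by
      rw [hdenR t, Complex.norm_real, Real.norm_eq_abs]
      exact abs_of_pos (by positivity)
    rw [hd2]
    have hpos1 : (0 : ℝ) < (-t) / 2 := by linarith
    have hpos2 : (0 : ℝ) < t ^ 2 + 1 := by positivity
    have hden_pos : (0 : ℝ) < ‖(t : ℂ) - z‖ * (t ^ 2 + 1) := by
      have : (0 : ℝ) < ‖(t : ℂ) - z‖ := lt_of_lt_of_le hpos1 hd1
      positivity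
    calc ‖z * (t : ℂ) + 1‖ / (‖(t : ℂ) - z‖ * (t ^ 2 + 1))
        ≤ ((‖z‖ + 1) * (-t)) / (((-t) / 2) * (t ^ 2 + 1)) := by
          apply div_le_div₀ (by positivity) hnum (by positivity)
          exact mul_le_mul_of_nonneg_right hd1 (le_of_lt hpos2)
      _ = 2 * (‖z‖ + 1) / (t ^ 2 + 1) := by
          rw [div_eq_div_iff (by positivity) (by positivity)]
          ring
      _ = 2 * (‖z‖ + 1) * (1 + t ^ 2)⁻¹ := by
          rw [div_eq_mul_inv]; ring_nf
  have h2 : IntegrableOn f' (Set.Icc (-T) 0) := hcont.integrableOn_Icc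
  have hsub : Set.Iic (0 : ℝ) ⊆ Set.Iic (-T) ∪ Set.Icc (-T) 0 := by
    intro t ht
    rcases le_or_gt t (-T) with h | h
    · exact Or.inl h
    · exact Or.inr ⟨le_of_lt h, ht⟩
  exact (h1.union h2).mono_set hsub

/-- The antiderivative tends to `-π i` at `-∞`. -/
lemma nev_aux_tendsto (z : ℂ) (hz : 0 < z.im) :
    Tendsto (fun t : ℝ => Complex.log ((t : ℂ) - z) - ((Real.log (t ^ 2 + 1) : ℝ) : ℂ) / 2)
      atBot (𝓝 (-(π : ℂ) * I)) := by
  have hne : ∀ t : ℝ, ((t : ℂ) - z) ≠ 0 := by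
    intro t h
    have : ((t : ℂ) - z).im = 0 := by rw [h]; simp
    simp only [Complex.sub_im, Complex.ofReal_im, zero_sub, neg_eq_zero] at this
    exact hz.ne' this
  -- real part limit
  have s₂ : Tendsto (fun t : ℝ => (t ^ 2 + 1)⁻¹) atBot (𝓝 0) := by
    have hsq : Tendsto (fun t : ℝ => t ^ 2 + 1) atBot atTop := by
      apply tendsto_atTop_mono' atBot _ tendsto_neg_atBot_atTop
      filter_upwards [eventually_le_atBot (-1 : ℝ)] with t ht
      nlinarith
    exact hsq.inv_tendsto_atTop
  have s₁ : Tendsto (fun t : ℝ => t / (t ^ 2 + 1)) atBot (𝓝 0) := by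
    apply squeeze_zero_norm' (a := fun t : ℝ => (-t)⁻¹)
    · filter_upwards [eventually_le_atBot (-1 : ℝ)] with t ht
      have ht0 : t < 0 := by linarith
      have h1 : ‖t / (t ^ 2 + 1)‖ = (-t) / (t ^ 2 + 1) := by
        rw [Real.norm_eq_abs, abs_div, abs_of_neg ht0, abs_of_pos (by positivity : (0:ℝ) < t ^ 2 + 1)]
      rw [h1, inv_eq_one_div, div_le_div_iff₀ (by positivity) (by linarith)]
      nlinarith
    · exact tendsto_inv_atTop_zero.comp tendsto_neg_atBot_atTop
  have hu1 : Tendsto (fun t : ℝ => ((t - z.re) ^ 2 + z.im ^ 2) / (t ^ 2 + 1)) atBot (𝓝 1) := by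
    have heq : ∀ t : ℝ, ((t - z.re) ^ 2 + z.im ^ 2) / (t ^ 2 + 1)
        = 1 + (-2 * z.re) * (t / (t ^ 2 + 1)) + (z.re ^ 2 + z.im ^ 2 - 1) * (t ^ 2 + 1)⁻¹ := by
      intro t
      have h : (t ^ 2 + 1 : ℝ) ≠ 0 := by positivity
      field_simp
      ring
    have := (tendsto_const_nhds (x := (1 : ℝ)) (f := atBot)).add
      ((s₁.const_mul (-2 * z.re)).add (s₂.const_mul (z.re ^ 2 + z.im ^ 2 - 1)))
    simp only [mul_zero, add_zero] at this
    refine Tendsto.congr (fun t => ?_) this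
    rw [heq t]; ring
  have hA : Tendsto (fun t : ℝ =>
      Real.log (‖(t : ℂ) - z‖) - Real.log (t ^ 2 + 1) / 2) atBot (𝓝 0) := by
    have hgu : ∀ t : ℝ,
        Real.log (‖(t : ℂ) - z‖) - Real.log (t ^ 2 + 1) / 2
          = Real.log (((t - z.re) ^ 2 + z.im ^ 2) / (t ^ 2 + 1)) / 2 := by
      intro t
      have hnsq : Complex.normSq ((t : ℂ) - z) = (t - z.re) ^ 2 + z.im ^ 2 := by
        simp [Complex.normSq_apply, Complex.sub_re, Complex.sub_im]
        ring
      have hnum_pos : (0 : ℝ) < (t - z.re) ^ 2 + z.im ^ 2 := by positivity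
      have habs : ‖(t : ℂ) - z‖ = Real.sqrt ((t - z.re) ^ 2 + z.im ^ 2) := by
        rw [Complex.norm_def, hnsq]
      rw [habs, Real.log_sqrt (le_of_lt hnum_pos),
        Real.log_div (ne_of_gt hnum_pos) (by positivity)]
      ring
    have hlog := ((Real.continuousAt_log one_ne_zero).tendsto.comp hu1).div_const 2
    simp only [Real.log_one, zero_div] at hlog
    exact Tendsto.congr (fun t => (hgu t).symm) hlog
  -- imaginary part limit
  have habsT : Tendsto (fun t : ℝ => ‖(t : ℂ) - z‖) atBot atTop := by
    apply tendsto_atTop_mono (f := fun t : ℝ => -t - ‖z‖)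
    · intro t
      have h1 := norm_sub_norm_le ((t : ℂ)) z
      rw [Complex.norm_real, Real.norm_eq_abs] at h1
      have : -t ≤ |t| := neg_le_abs t
      calc -t - ‖z‖ ≤ |t| - ‖z‖ := by linarith
        _ ≤ ‖(t : ℂ) - z‖ := h1
    · exact tendsto_atTop_add_const_right _ _ tendsto_neg_atBot_atTop
  have hquot : Tendsto (fun t : ℝ => z.im / ‖(t : ℂ) - z‖) atBot (𝓝 0) := by
    have := habsT.inv_tendsto_atTop.const_mul z.im
    simpa only [mul_zero, div_eq_mul_inv, Pi.inv_apply] using this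
  have harcsin := (Real.continuous_arcsin.tendsto 0).comp hquot
  rw [Real.arcsin_zero] at harcsin
  have hB : Tendsto (fun t : ℝ => Complex.arg ((t : ℂ) - z)) atBot (𝓝 (-π)) := by
    have := harcsin.sub_const π
    rw [zero_sub] at this
    refine Tendsto.congr' ?_ this
    filter_upwards [eventually_lt_atBot z.re] with t ht
    have hre : ((t : ℂ) - z).re < 0 := by
      simp only [Complex.sub_re, Complex.ofReal_re]; linarith
    have him : ((t : ℂ) - z).im < 0 := by
      simp only [Complex.sub_im, Complex.ofReal_im, zero_sub]; linarith
    rw [Complex.arg_of_re_neg_of_im_neg hre him]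
    congr 1
    simp only [Function.comp_apply]
    congr 1
    simp [Complex.sub_im]
  -- combine
  have hFeq : ∀ t : ℝ,
      Complex.log ((t : ℂ) - z) - ((Real.log (t ^ 2 + 1) : ℝ) : ℂ) / 2
        = ((Real.log (‖(t : ℂ) - z‖) - Real.log (t ^ 2 + 1) / 2 : ℝ) : ℂ)
          + ((Complex.arg ((t : ℂ) - z) : ℝ) : ℂ) * I := by
    intro t
    rw [Complex.log]
    push_cast
    ring
  have hcomb := ((Complex.continuous_ofReal.tendsto 0).comp hA).add
    (((Complex.continuous_ofReal.tendsto (-π)).comp hB).mul_const I)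
  have hval : ((0 : ℝ) : ℂ) + ((-π : ℝ) : ℂ) * I = -(π : ℂ) * I := by push_cast; ring
  rw [hval] at hcomb
  exact Tendsto.congr (fun t => (hFeq t).symm) hcomb

/-- Integral representation of the principal logarithm in the upper half-plane;
in particular `log` is a Nevanlinna–Pick function. -/
theorem log_nevanlinna_pick_representation :
    (∀ z : ℂ, 0 < z.im →
      Complex.log z = ∫ t in Set.Iio (0:ℝ),
        (((t : ℂ) - z)⁻¹ - (t : ℂ) / ((t : ℂ) ^ 2 + 1))) ∧
    DifferentiableOn ℂ Complex.log {z : ℂ | 0 < z.im} ∧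
    (∀ z : ℂ, 0 < z.im → 0 ≤ (Complex.log z).im) := by
  refine ⟨?_, ?_, ?_⟩
  · intro z hz
    have hne : ∀ t : ℝ, ((t : ℂ) - z) ≠ 0 := by
      intro t h
      have : ((t : ℂ) - z).im = 0 := by rw [h]; simp
      simp only [Complex.sub_im, Complex.ofReal_im, zero_sub, neg_eq_zero] at this
      exact hz.ne' this
    have hslit : ∀ t : ℝ, ((t : ℂ) - z) ∈ Complex.slitPlane := by
      intro t
      rw [Complex.mem_slitPlane_iff]
      right
      simp only [Complex.sub_im, Complex.ofReal_im, zero_sub, neg_ne_zero]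
      exact hz.ne'
    have hden : ∀ t : ℝ, ((t : ℂ) ^ 2 + 1) ≠ 0 := by
      intro t
      have h : ((t : ℂ) ^ 2 + 1) = ((t ^ 2 + 1 : ℝ) : ℂ) := by push_cast; ring
      rw [h]
      exact_mod_cast (by positivity : (t ^ 2 + 1 : ℝ) ≠ 0)
    set F : ℝ → ℂ := fun t =>
      Complex.log ((t : ℂ) - z) - ((Real.log (t ^ 2 + 1) : ℝ) : ℂ) / 2 with hF
    have hderiv : ∀ t : ℝ, HasDerivAt F
        (((t : ℂ) - z)⁻¹ - (t : ℂ) / ((t : ℂ) ^ 2 + 1)) t := by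
      intro t
      have h1 : HasDerivAt (fun w : ℂ => Complex.log (w - z)) (((t : ℂ) - z)⁻¹) ((t : ℂ)) := by
        have := (Complex.hasDerivAt_log (hslit t)).comp ((t : ℂ))
          ((hasDerivAt_id ((t : ℂ))).sub_const z)
        simpa [Function.comp_def] using this
      have h1' : HasDerivAt (fun t : ℝ => Complex.log ((t : ℂ) - z)) (((t : ℂ) - z)⁻¹) t :=
        h1.comp_ofReal
      have hp : HasDerivAt (fun t : ℝ => t ^ 2 + 1) (2 * t) t := by
        simpa using ((hasDerivAt_pow 2 t).add_const 1)
      have h2 : HasDerivAt (fun t : ℝ => Real.log (t ^ 2 + 1)) (2 * t / (t ^ 2 + 1)) t := by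
        have := (Real.hasDerivAt_log (by positivity : (t ^ 2 + 1 : ℝ) ≠ 0)).comp t hp
        simpa [div_eq_inv_mul, mul_comm, Function.comp_def] using this
      have h2' : HasDerivAt (fun t : ℝ => ((Real.log (t ^ 2 + 1) : ℝ) : ℂ))
          (((2 * t / (t ^ 2 + 1) : ℝ) : ℂ)) t := h2.ofReal_comp
      have := h1'.sub (h2'.div_const 2)
      refine this.congr_deriv ?_
      have hcast : ((2 * t / (t ^ 2 + 1) : ℝ) : ℂ) = 2 * (t : ℂ) / ((t : ℂ) ^ 2 + 1) := by
        push_cast; ring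
      rw [hcast]
      ring
    have key : (∫ t in Set.Iic (0 : ℝ),
        (((t : ℂ) - z)⁻¹ - (t : ℂ) / ((t : ℂ) ^ 2 + 1))) = F 0 - (-(π : ℂ) * I) := by
      exact integral_Iic_of_hasDerivAt_of_tendsto
        (hderiv 0).continuousAt.continuousWithinAt
        (fun x _ => hderiv x) (nev_aux_int z hz) (nev_aux_tendsto z hz)
    have hIio : (∫ t in Set.Iio (0 : ℝ),
        (((t : ℂ) - z)⁻¹ - (t : ℂ) / ((t : ℂ) ^ 2 + 1)))
        = ∫ t in Set.Iic (0 : ℝ), (((t : ℂ) - z)⁻¹ - (t : ℂ) / ((t : ℂ) ^ 2 + 1)) :=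
      setIntegral_congr_set Iio_ae_eq_Iic
    rw [hIio, key]
    have hF0 : F 0 = Complex.log (-z) := by
      simp [hF]
    have hlogneg : Complex.log (-z) = Complex.log z - (π : ℂ) * I := by
      rw [Complex.log, Complex.log, Complex.arg_neg_eq_arg_sub_pi_of_im_pos hz, norm_neg]
      push_cast
      ring
    rw [hF0, hlogneg]
    ring
  · intro z hz
    exact (Complex.differentiableAt_log
      (Complex.mem_slitPlane_iff.mpr (Or.inr (ne_of_gt hz)))).differentiableWithinAt
  · intro z hz
    rw [Complex.log_im]
    exact Complex.arg_nonneg_iff.mpr hz.le
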